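/- On ℂ × ℝ³ with coordinates (z,q,r,s), setting z₁ = (r+is)z − iq and z₂ = iqz − (r−is), the 1-form ω = 2z dq + i(1+z²) dr + (1−z²) ds satisfies ω ∧ dω = 2 dz ∧ dz₁ ∧ dz₂. -/

import Mathlib

open Complex

/- Coordinates on ℂ × ℝ³: x = (z, q, r, s) with x.1 = z, x.2.1 = q,
x.2.2.1 = r, x.2.2.2 = s. -/

/-- Coefficient a = 2z of dq in ω. -/
noncomputable def aC : ℂ × ℝ × ℝ × ℝ → ℂ := fun x => 2 * x.1
/-- Coefficient b = i(1+z²) of dr in ω. -/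
noncomputable def bC : ℂ × ℝ × ℝ × ℝ → ℂ := fun x => I * (1 + x.1 ^ 2)
/-- Coefficient c = 1−z² of ds in ω. -/
noncomputable def cC : ℂ × ℝ × ℝ × ℝ → ℂ := fun x => 1 - x.1 ^ 2
/-- z₁ = (r+is)z − iq. -/
noncomputable def z1C : ℂ × ℝ × ℝ × ℝ → ℂ := fun x =>
  ((x.2.2.1 : ℂ) + I * (x.2.2.2 : ℂ)) * x.1 - I * (x.2.1 : ℂ)
/-- z₂ = iqz − (r−is). -/
noncomputable def z2C : ℂ × ℝ × ℝ × ℝ → ℂ := fun x =>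
  I * (x.2.1 : ℂ) * x.1 - ((x.2.2.1 : ℂ) - I * (x.2.2.2 : ℂ))

/-- Coordinate 1-forms. -/
def dzC (X : ℂ × ℝ × ℝ × ℝ) : ℂ := X.1
def dqC (X : ℂ × ℝ × ℝ × ℝ) : ℂ := (X.2.1 : ℂ)
def drC (X : ℂ × ℝ × ℝ × ℝ) : ℂ := (X.2.2.1 : ℂ)
def dsC (X : ℂ × ℝ × ℝ × ℝ) : ℂ := (X.2.2.2 : ℂ)

/-- The 1-form ω = 2z dq + i(1+z²) dr + (1−z²) ds evaluated on a tangent vector. -/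
noncomputable def omegaC (x X : ℂ × ℝ × ℝ × ℝ) : ℂ :=
  aC x * dqC X + bC x * drC X + cC x * dsC X

/-- dω = da∧dq + db∧dr + dc∧ds evaluated on a pair of tangent vectors, with the
convention (α∧β)(X,Y) = α(X)β(Y) − α(Y)β(X). -/
noncomputable def domegaC (x X Y : ℂ × ℝ × ℝ × ℝ) : ℂ :=
  (fderiv ℝ aC x X * dqC Y - fderiv ℝ aC x Y * dqC X) +
    (fderiv ℝ bC x X * drC Y - fderiv ℝ bC x Y * drC X) +
    (fderiv ℝ cC x X * dsC Y - fderiv ℝ cC x Y * dsC X)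

section aux
variable (x X : ℂ × ℝ × ℝ × ℝ)

lemma hz' : HasFDerivAt (fun x : ℂ × ℝ × ℝ × ℝ => x.1)
    (ContinuousLinearMap.fst ℝ ℂ (ℝ × ℝ × ℝ)) x := hasFDerivAt_fst

lemma hq' : HasFDerivAt (fun x : ℂ × ℝ × ℝ × ℝ => (x.2.1 : ℂ))
    (Complex.ofRealCLM.comp ((ContinuousLinearMap.fst ℝ ℝ (ℝ × ℝ)).comp
      (ContinuousLinearMap.snd ℝ ℂ (ℝ × ℝ × ℝ)))) x :=
  by have h := Complex.ofRealCLM.hasFDerivAt.comp x ((hasFDerivAt_fst : HasFDerivAt (Prod.fst : ℝ × ℝ × ℝ → ℝ) _ x.2).comp x (hasFDerivAt_snd : HasFDerivAt (Prod.snd : ℂ × ℝ × ℝ × ℝ → ℝ × ℝ × ℝ) _ x)); exact h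

lemma hr' : HasFDerivAt (fun x : ℂ × ℝ × ℝ × ℝ => (x.2.2.1 : ℂ))
    (Complex.ofRealCLM.comp ((ContinuousLinearMap.fst ℝ ℝ ℝ).comp
      ((ContinuousLinearMap.snd ℝ ℝ (ℝ × ℝ)).comp
        (ContinuousLinearMap.snd ℝ ℂ (ℝ × ℝ × ℝ))))) x :=
  by have h := Complex.ofRealCLM.hasFDerivAt.comp x
        ((hasFDerivAt_fst : HasFDerivAt (Prod.fst : ℝ × ℝ → ℝ) _ x.2.2).comp x ((hasFDerivAt_snd : HasFDerivAt (Prod.snd : ℝ × ℝ × ℝ → ℝ × ℝ) _ x.2).comp x (hasFDerivAt_snd : HasFDerivAt (Prod.snd : ℂ × ℝ × ℝ × ℝ → ℝ × ℝ × ℝ) _ x))); exact h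

lemma hs' : HasFDerivAt (fun x : ℂ × ℝ × ℝ × ℝ => (x.2.2.2 : ℂ))
    (Complex.ofRealCLM.comp ((ContinuousLinearMap.snd ℝ ℝ ℝ).comp
      ((ContinuousLinearMap.snd ℝ ℝ (ℝ × ℝ)).comp
        (ContinuousLinearMap.snd ℝ ℂ (ℝ × ℝ × ℝ))))) x :=
  by have h := Complex.ofRealCLM.hasFDerivAt.comp x
        ((hasFDerivAt_snd : HasFDerivAt (Prod.snd : ℝ × ℝ → ℝ) _ x.2.2).comp x ((hasFDerivAt_snd : HasFDerivAt (Prod.snd : ℝ × ℝ × ℝ → ℝ × ℝ) _ x.2).comp x (hasFDerivAt_snd : HasFDerivAt (Prod.snd : ℂ × ℝ × ℝ × ℝ → ℝ × ℝ × ℝ) _ x))); exact h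

lemma fderiv_aC : fderiv ℝ aC x X = 2 * X.1 := by
  have h : HasFDerivAt aC _ x := (hz' x).const_mul (2 : ℂ)
  rw [h.fderiv]; simp

lemma fderiv_bC : fderiv ℝ bC x X = 2 * Complex.I * x.1 * X.1 := by
  have h : HasFDerivAt (fun x : ℂ × ℝ × ℝ × ℝ => Complex.I * (1 + x.1 * x.1)) _ x :=
    (((hz' x).mul (hz' x)).const_add 1).const_mul Complex.I
  have hb : bC = fun x : ℂ × ℝ × ℝ × ℝ => Complex.I * (1 + x.1 * x.1) := by
    funext y; simp [bC, sq]
  rw [hb, h.fderiv]; simp; ring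

lemma fderiv_cC : fderiv ℝ cC x X = -(2 * x.1 * X.1) := by
  have h : HasFDerivAt (fun x : ℂ × ℝ × ℝ × ℝ => 1 - x.1 * x.1) _ x :=
    (hasFDerivAt_const (1 : ℂ) x).sub ((hz' x).mul (hz' x))
  have hc : cC = fun x : ℂ × ℝ × ℝ × ℝ => 1 - x.1 * x.1 := by
    funext y; simp [cC, sq]
  rw [hc, h.fderiv]; simp; ring

lemma fderiv_z1C : fderiv ℝ z1C x X =
    ((X.2.2.1 : ℂ) + Complex.I * X.2.2.2) * x.1
      + ((x.2.2.1 : ℂ) + Complex.I * x.2.2.2) * X.1 - Complex.I * X.2.1 := by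
  have h : HasFDerivAt z1C _ x :=
    (((hr' x).add ((hs' x).const_mul Complex.I)).mul (hz' x)).sub ((hq' x).const_mul Complex.I)
  rw [h.fderiv]; simp; ring

lemma fderiv_z2C : fderiv ℝ z2C x X =
    Complex.I * X.2.1 * x.1 + Complex.I * x.2.1 * X.1
      - ((X.2.2.1 : ℂ) - Complex.I * X.2.2.2) := by
  have h : HasFDerivAt z2C _ x :=
    (((hq' x).const_mul Complex.I).mul (hz' x)).sub ((hr' x).sub ((hs' x).const_mul Complex.I))
  rw [h.fderiv]; simp; ring

end aux

/-- On ℂ × ℝ³, ω∧dω = 2 dz∧dz₁∧dz₂, evaluated on triples of tangent vectors with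
(ω∧τ)(X,Y,Z) = ω(X)τ(Y,Z) − ω(Y)τ(X,Z) + ω(Z)τ(X,Y) and the determinant convention
for a triple wedge of 1-forms. -/

theorem omega_wedge_domega_eq (x X Y Z : ℂ × ℝ × ℝ × ℝ) :
    omegaC x X * domegaC x Y Z - omegaC x Y * domegaC x X Z +
      omegaC x Z * domegaC x X Y =
    2 * (dzC X * (fderiv ℝ z1C x Y * fderiv ℝ z2C x Z - fderiv ℝ z1C x Z * fderiv ℝ z2C x Y) -
      dzC Y * (fderiv ℝ z1C x X * fderiv ℝ z2C x Z - fderiv ℝ z1C x Z * fderiv ℝ z2C x X) +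
      dzC Z * (fderiv ℝ z1C x X * fderiv ℝ z2C x Y - fderiv ℝ z1C x Y * fderiv ℝ z2C x X)) := by
  simp only [omegaC, domegaC, aC, bC, cC, dzC, dqC, drC, dsC,
    fderiv_aC, fderiv_bC, fderiv_cC, fderiv_z1C, fderiv_z2C]
  ring_nf
  simp only [Complex.I_sq]
  ring
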